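/- For m, n ≥ 2, the value n + 2 is a Laplacian eigenvalue of NC(F_{m,n}) with multiplicity at least m - 1, witnessed by eigenvectors of the form (0_n, v, -v, 0_n) where v ⊥ 1 in R^m. -/
import Mathlib


open scoped Classical
open Matrix

/-- The Laplacian matrix of the path graph `P_n`. -/
noncomputable def lapP (n : ℕ) : Matrix (Fin n) (Fin n) ℝ :=
  (SimpleGraph.pathGraph n).lapMatrix ℝ

/-- The all-ones matrix. -/
def JJ (a b : ℕ) : Matrix (Fin a) (Fin b) ℝ := Matrix.of fun _ _ => 1

/-- The Laplacian matrix of the graph `NC(F_{m,n})`, obtained from two disjoint copies of the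
generalized fan graph `F_{m,n} = K̄_m + P_n` by adding a perfect matching between the
corresponding `m` center vertices.  Vertex order: first path, first centers, second centers,
second path. -/
noncomputable def lapNC (m n : ℕ) :
    Matrix ((Fin n ⊕ Fin m) ⊕ (Fin m ⊕ Fin n)) ((Fin n ⊕ Fin m) ⊕ (Fin m ⊕ Fin n)) ℝ :=
  Matrix.fromBlocks
    (Matrix.fromBlocks (lapP n + (m : ℝ) • 1) (-JJ n m) (-JJ m n) (((n : ℝ) + 1) • 1))
    (Matrix.fromBlocks 0 0 (-1) 0)
    (Matrix.fromBlocks 0 (-1) 0 0)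
    (Matrix.fromBlocks (((n : ℝ) + 1) • 1) (-JJ m n) (-JJ n m) (lapP n + (m : ℝ) • 1))

/-- The embedding `v ↦ (0, v, -v, 0)`. -/
noncomputable def embNC (m n : ℕ) :
    (Fin m → ℝ) →ₗ[ℝ] ((Fin n ⊕ Fin m) ⊕ (Fin m ⊕ Fin n) → ℝ) :=
  { toFun := fun v => Sum.elim (Sum.elim (0 : Fin n → ℝ) v) (Sum.elim (-v) (0 : Fin n → ℝ)),
    map_add' := by
      intro x y; funext z; rcases z with (z | z) | (z | z) <;> simp <;> ring,
    map_smul' := by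
      intro c x; funext z; rcases z with (z | z) | (z | z) <;> simp }

lemma lapNC_key (m n : ℕ) (v : Fin m → ℝ) (hv : ∑ i, v i = 0) :
    lapNC m n *ᵥ Sum.elim (Sum.elim (0 : Fin n → ℝ) v) (Sum.elim (-v) (0 : Fin n → ℝ)) =
      ((n : ℝ) + 2) • Sum.elim (Sum.elim (0 : Fin n → ℝ) v) (Sum.elim (-v) (0 : Fin n → ℝ)) := by
  have hJ : ∀ a : ℕ, JJ a m *ᵥ v = 0 := by
    intro a; funext i; simp [JJ, mulVec, dotProduct, hv]
  have hJ' : ∀ a : ℕ, JJ a m *ᵥ (-v) = 0 := by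
    intro a; rw [mulVec_neg, hJ]; simp
  unfold lapNC
  funext x
  rcases x with (x | x) | (x | x) <;>
    simp [fromBlocks_mulVec, Matrix.neg_mulVec, hJ, hJ', Matrix.add_mulVec,
      smul_mulVec, Pi.smul_apply] <;> ring

/-- The sum-of-coordinates functional. -/
noncomputable def sumL (m : ℕ) : (Fin m → ℝ) →ₗ[ℝ] ℝ :=
  { toFun := fun v => ∑ i, v i,
    map_add' := by intro x y; simp [Finset.sum_add_distrib],
    map_smul' := by intro c x; simp [Finset.mul_sum] }

lemma finrank_ker_sumL (m : ℕ) (hm : 2 ≤ m) :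
    Module.finrank ℝ (LinearMap.ker (sumL m)) = m - 1 := by
  have hsurj : LinearMap.range (sumL m) = ⊤ := by
    rw [LinearMap.range_eq_top]
    intro c
    refine ⟨fun _ => c / m, ?_⟩
    have hm0 : (m:ℝ) ≠ 0 := by positivity
    simp [sumL]
    field_simp
  have h := LinearMap.finrank_range_add_finrank_ker (sumL m)
  rw [hsurj] at h
  simp [Module.finrank_self, Module.finrank_fintype_fun_eq_card] at h
  omega

/-- for m, n ≥ 2, the value n+2 is a Laplacian eigenvalue of NC(F_{m,n}) with
multiplicity at least m-1, witnessed by eigenvectors (0, v, -v, 0) with v ⊥ 1 in ℝ^m. -/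
theorem lapNC_eigenvalue_n_add_two (m n : ℕ) (hm : 2 ≤ m) (hn : 2 ≤ n) :
    (∀ v : Fin m → ℝ, ∑ i, v i = 0 →
      lapNC m n *ᵥ Sum.elim (Sum.elim (0 : Fin n → ℝ) v) (Sum.elim (-v) (0 : Fin n → ℝ)) =
        ((n : ℝ) + 2) • Sum.elim (Sum.elim (0 : Fin n → ℝ) v) (Sum.elim (-v) (0 : Fin n → ℝ))) ∧
    m - 1 ≤ Module.finrank ℝ
      (Module.End.eigenspace (Matrix.toLin' (lapNC m n)) ((n : ℝ) + 2)) := by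
  refine ⟨fun v hv => lapNC_key m n v hv, ?_⟩
  set E := Module.End.eigenspace (Matrix.toLin' (lapNC m n)) ((n : ℝ) + 2)
  have hmem : ∀ v : LinearMap.ker (sumL m), embNC m n v.1 ∈ E := by
    intro v
    rw [Module.End.mem_eigenspace_iff]
    have hv : ∑ i, (v : Fin m → ℝ) i = 0 := v.2
    simpa [Matrix.toLin'_apply, embNC] using lapNC_key m n v.1 hv
  let f : LinearMap.ker (sumL m) →ₗ[ℝ] E :=
    { toFun := fun v => ⟨embNC m n v.1, hmem v⟩,
      map_add' := by intro x y; ext : 1; simp,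
      map_smul' := by intro c x; ext : 1; simp }
  have hinj : Function.Injective f := by
    intro x y hxy
    ext i
    have h1 : embNC m n x.1 = embNC m n y.1 := congrArg Subtype.val hxy
    have := congrFun h1 (Sum.inl (Sum.inr i))
    simpa [embNC] using this
  have := LinearMap.finrank_le_finrank_of_injective hinj
  rw [finrank_ker_sumL m hm] at this
  exact this
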